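/- Let ψ₁, …, ψ_N be a linearly independent family of unit vectors spanning ℂ^N with biorthogonal family ω₁, …, ω_N, let G = ∑ᵢ |ωᵢ⟩⟨ωᵢ|, κ = 1/λ_max(G), and let (P₁, …, P_N, P_{N+1}) be the optimal unambiguous minimax POVM Pᵢ = κ·|ωᵢ⟩⟨ωᵢ| (i ≤ N), P_{N+1} = I − κ·G. Then there exists an unambiguous POVM (Q₁,…,Q_{N+1}) different from (P₁,…,P_{N+1}) with min_{i≤N} ⟨ψᵢ, Qᵢ ψᵢ⟩ = κ if and only if there exists i ∈ {1,…,N} and ε > 0 such that ε·|ωᵢ⟩⟨ωᵢ| ≤ P_{N+1} in the positive semidefinite order (equivalently, ωᵢ lies in the range of P_{N+1}). -/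

import Mathlib

open Matrix ComplexOrder

namespace UnambAux

variable {N : ℕ}

lemma vmv_mulVec (w v x : Fin N → ℂ) :
    vecMulVec w v *ᵥ x = (v ⬝ᵥ x) • w := by
  ext i
  simp only [mulVec, dotProduct, vecMulVec_apply, Pi.smul_apply, smul_eq_mul, Finset.sum_mul]
  exact Finset.sum_congr rfl fun j _ => by ring

lemma quad (a x y : Fin N → ℂ) :
    star x ⬝ᵥ (vecMulVec a (star a) *ᵥ y) = (star a ⬝ᵥ y) * star (star a ⬝ᵥ x) := by
  rw [vmv_mulVec, dotProduct_smul, smul_eq_mul]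
  congr 1
  exact star_dotProduct x a

lemma vmv_conjT (w v : Fin N → ℂ) :
    (vecMulVec w (star v))ᴴ = vecMulVec v (star w) := by
  ext i j
  simp [conjTranspose_apply, vecMulVec_apply, mul_comm]

lemma smulW_psd {r : ℝ} (hr : 0 ≤ r) (a : Fin N → ℂ) :
    ((r : ℂ) • vecMulVec a (star a)).PosSemidef := by
  refine Matrix.PosSemidef.of_dotProduct_mulVec_nonneg ?_ ?_
  · have h := vmv_conjT a a
    unfold Matrix.IsHermitian
    rw [conjTranspose_smul, h]
    simp [Complex.star_def, Complex.conj_ofReal]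
  · intro x
    rw [smul_mulVec, dotProduct_smul, smul_eq_mul, quad]
    exact mul_nonneg (Complex.zero_le_real.mpr hr) (mul_star_self_nonneg _)

lemma W_psd (a : Fin N → ℂ) : (vecMulVec a (star a)).PosSemidef := by
  simpa using smulW_psd zero_le_one a

lemma sum_mulVec' (s : Finset (Fin N)) (f : Fin N → Matrix (Fin N) (Fin N) ℂ)
    (x : Fin N → ℂ) : (∑ j ∈ s, f j) *ᵥ x = ∑ j ∈ s, f j *ᵥ x := by
  classical
  induction s using Finset.induction with
  | empty => simp [Matrix.zero_mulVec]
  | insert _ _ hx ih => rw [Finset.sum_insert hx, Finset.sum_insert hx, Matrix.add_mulVec, ih]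

lemma dot_sum (s : Finset (Fin N)) (v : Fin N → ℂ) (f : Fin N → (Fin N → ℂ)) :
    v ⬝ᵥ (∑ j ∈ s, f j) = ∑ j ∈ s, v ⬝ᵥ f j := by
  classical
  induction s using Finset.induction with
  | empty => simp
  | insert _ _ hx ih => rw [Finset.sum_insert hx, Finset.sum_insert hx, dotProduct_add, ih]

lemma psd_sum {s : Finset (Fin N)} {f : Fin N → Matrix (Fin N) (Fin N) ℂ}
    (hf : ∀ j ∈ s, (f j).PosSemidef) : (∑ j ∈ s, f j).PosSemidef := by
  classical
  induction s using Finset.induction with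
  | empty => simpa using Matrix.PosSemidef.zero
  | insert _ _ hx ih =>
    rw [Finset.sum_insert hx]
    exact (hf _ (Finset.mem_insert_self _ _)).add
      (ih fun j hj => hf j (Finset.mem_insert_of_mem hj))

section Expand

variable (ψ ω : Fin N → (Fin N → ℂ))
  (hli : LinearIndependent ℂ ψ)
  (hspan : Submodule.span ℂ (Set.range ψ) = ⊤)
  (hbi : ∀ i j, star (ω i) ⬝ᵥ ψ j = if i = j then 1 else 0)

include hli hspan hbi in
lemma expand (x : Fin N → ℂ) : x = ∑ j, (star (ω j) ⬝ᵥ x) • ψ j := by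
  classical
  let b : Module.Basis (Fin N) ℂ (Fin N → ℂ) := Module.Basis.mk hli (le_of_eq hspan.symm)
  have hb : ∀ i, b i = ψ i := fun i => Module.Basis.mk_apply hli _ i
  have hx : (∑ i, b.repr x i • ψ i) = x := by
    conv_rhs => rw [← b.sum_repr x]
    exact Finset.sum_congr rfl fun i _ => by rw [hb]
  have hcoef : ∀ j, star (ω j) ⬝ᵥ x = b.repr x j := by
    intro j
    conv_lhs => rw [← hx]
    have : star (ω j) ⬝ᵥ (∑ i, b.repr x i • ψ i)
        = ∑ i, b.repr x i * (star (ω j) ⬝ᵥ ψ i) := by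
      simp only [dotProduct, Finset.sum_apply, Pi.smul_apply, smul_eq_mul, Pi.star_apply,
        Finset.mul_sum]
      rw [Finset.sum_comm]
      exact Finset.sum_congr rfl fun i _ => Finset.sum_congr rfl fun l _ => by ring
    rw [this]
    simp [hbi]
  conv_lhs => rw [← hx]
  exact Finset.sum_congr rfl fun j _ => by rw [hcoef]

include hli hspan hbi in
lemma struct {A : Matrix (Fin N) (Fin N) ℂ} (hA : A.PosSemidef) (k : Fin N)
    (h0 : ∀ j, j ≠ k → star (ψ j) ⬝ᵥ (A *ᵥ ψ j) = 0) :
    ∃ c : ℝ, 0 ≤ c ∧ A = (c : ℂ) • vecMulVec (ω k) (star (ω k)) := by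
  classical
  have hker : ∀ j, j ≠ k → A *ᵥ ψ j = 0 :=
    fun j hj => (hA.dotProduct_mulVec_zero_iff (ψ j)).mp (h0 j hj)
  have hact : ∀ x, A *ᵥ x = (star (ω k) ⬝ᵥ x) • (A *ᵥ ψ k) := by
    intro x
    conv_lhs => rw [expand ψ ω hli hspan hbi x]
    have : A *ᵥ (∑ j, (star (ω j) ⬝ᵥ x) • ψ j)
        = ∑ j, (star (ω j) ⬝ᵥ x) • (A *ᵥ ψ j) := by
      rw [← A.mulVecLin_apply, map_sum]
      exact Finset.sum_congr rfl fun j _ => by rw [_root_.map_smul, A.mulVecLin_apply]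
    rw [this, Finset.sum_eq_single k]
    · intro j _ hj; rw [hker j hj, smul_zero]
    · intro h; exact absurd (Finset.mem_univ k) h
  have hmat : A = vecMulVec (A *ᵥ ψ k) (star (ω k)) := by
    ext i j
    have h := congrFun (hact (Pi.single j 1)) i
    simpa [mulVec_single, vecMulVec_apply, dotProduct_single, mul_comm] using h
  set u := A *ᵥ ψ k with hu
  have hmat2 : A = vecMulVec (ω k) (star u) := by
    conv_lhs => rw [← hA.1, hmat, vmv_conjT]
  set z := star (ψ k) ⬝ᵥ u with hz
  have hz0 : 0 ≤ z := hA.dotProduct_mulVec_nonneg (ψ k)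
  have him : z.im = 0 := (Complex.nonneg_iff.mp hz0).2.symm
  have hzre : z = ((z.re : ℝ) : ℂ) := by
    apply Complex.ext <;> simp [him]
  refine ⟨z.re, (Complex.nonneg_iff.mp hz0).1, ?_⟩
  have hustar : u = ((z.re : ℝ) : ℂ) • ω k := by
    have h1 : u = (star u ⬝ᵥ ψ k) • ω k := by
      conv_lhs => rw [hu, hmat2, vmv_mulVec]
    have h2 : star u ⬝ᵥ ψ k = star z := by
      rw [hz, star_dotProduct u (ψ k)]
    rw [h1, h2, hzre]
    simp [Complex.star_def, Complex.conj_ofReal]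
  rw [hmat2, hustar]
  ext i j
  simp [vecMulVec_apply, Complex.star_def, Complex.conj_ofReal, Pi.smul_apply]
  ring

include hbi in
lemma valgen (r : ℝ) (k j : Fin N) :
    star (ψ j) ⬝ᵥ (((r : ℂ) • vecMulVec (ω k) (star (ω k))) *ᵥ ψ j)
      = (r : ℂ) * (if k = j then 1 else 0) := by
  rw [smul_mulVec, dotProduct_smul, smul_eq_mul, quad, hbi]
  congr 1
  split <;> simp

end Expand

end UnambAux



/-- An unambiguous POVM for the pure states `ψ₁, …, ψ_N`: the `N` conclusive elements
`Q₁, …, Q_N` together with the inconclusive element `Qinc` are positive semidefinite, sum to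
the identity, and never produce a wrong conclusive answer: `⟨ψᵢ, Q_j ψᵢ⟩ = 0` for `i ≠ j`. -/
def IsUnambPOVM {N : ℕ} (ψ : Fin N → (Fin N → ℂ))
    (Q : Fin N → Matrix (Fin N) (Fin N) ℂ) (Qinc : Matrix (Fin N) (Fin N) ℂ) : Prop :=
  (∀ i, (Q i).PosSemidef) ∧ Qinc.PosSemidef ∧ (∑ i, Q i) + Qinc = 1 ∧
    ∀ i j, i ≠ j → star (ψ i) ⬝ᵥ (Q j *ᵥ ψ i) = 0

set_option maxHeartbeats 1000000 in
/-- Non-uniqueness criterion for the optimal minimax unambiguous POVM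
`Pᵢ = κ|ωᵢ⟩⟨ωᵢ|`, `P_{N+1} = I − κG`: an unambiguous POVM different from it attaining the
optimal value `κ` exists if and only if `ε|ωᵢ⟩⟨ωᵢ| ≤ P_{N+1}` for some `i` and some `ε > 0`. -/
theorem optimal_unambiguous_povm_nonunique_iff
    {N : ℕ} (ψ ω : Fin N → (Fin N → ℂ))
    (hli : LinearIndependent ℂ ψ)
    (hspan : Submodule.span ℂ (Set.range ψ) = ⊤)
    (hunit : ∀ i, star (ψ i) ⬝ᵥ ψ i = 1)
    (hbi : ∀ i j, star (ω i) ⬝ᵥ ψ j = if i = j then 1 else 0)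
    (G : Matrix (Fin N) (Fin N) ℂ)
    (hG : G = ∑ i, vecMulVec (ω i) (star (ω i)))
    (lmax : ℝ)
    (hlmax : IsGreatest { x : ℝ | ∃ v : Fin N → ℂ, v ≠ 0 ∧ G *ᵥ v = (x : ℂ) • v } lmax)
    (κ : ℝ) (hκ : κ = 1 / lmax)
    (P : Fin N → Matrix (Fin N) (Fin N) ℂ) (Pinc : Matrix (Fin N) (Fin N) ℂ)
    (hP : P = fun i => (κ : ℂ) • vecMulVec (ω i) (star (ω i)))
    (hPinc : Pinc = 1 - (κ : ℂ) • G) :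
    (∃ (Q : Fin N → Matrix (Fin N) (Fin N) ℂ) (Qinc : Matrix (Fin N) (Fin N) ℂ),
        IsUnambPOVM ψ Q Qinc ∧ ¬(Q = P ∧ Qinc = Pinc) ∧
        (⨅ i, (star (ψ i) ⬝ᵥ (Q i *ᵥ ψ i)).re) = κ) ↔
      ∃ i, ∃ ε : ℝ, 0 < ε ∧ (Pinc - (ε : ℂ) • vecMulVec (ω i) (star (ω i))).PosSemidef := by
  
  classical
  obtain ⟨veig, hveig, hGveig⟩ := hlmax.1
  rcases Nat.eq_zero_or_pos N with hN | hN
  · subst hN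
    exact absurd (funext fun i => i.elim0) hveig
  haveI : Nonempty (Fin N) := ⟨⟨0, hN⟩⟩
  have hGpsd : G.PosSemidef := by
    rw [hG]; exact UnambAux.psd_sum fun j _ => UnambAux.W_psd (ω j)
  have hGquad : ∀ x : Fin N → ℂ, star x ⬝ᵥ (G *ᵥ x)
      = ∑ j, (star (ω j) ⬝ᵥ x) * star (star (ω j) ⬝ᵥ x) := by
    intro x
    rw [hG, UnambAux.sum_mulVec', UnambAux.dot_sum]
    exact Finset.sum_congr rfl fun j _ => UnambAux.quad (ω j) x x
  -- lmax > 0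
  have hs0 : (0 : ℂ) ≤ star veig ⬝ᵥ veig := dotProduct_star_self_nonneg veig
  have hsne : star veig ⬝ᵥ veig ≠ 0 :=
    fun h => hveig (dotProduct_star_self_eq_zero.mp h)
  have hsre : 0 < (star veig ⬝ᵥ veig).re := by
    rcases Complex.nonneg_iff.mp hs0 with ⟨h1, h2⟩
    rcases h1.lt_or_eq with h | h
    · exact h
    · exact absurd (Complex.ext h.symm h2.symm) hsne
  have heig : star veig ⬝ᵥ (G *ᵥ veig) = (lmax : ℂ) * (star veig ⬝ᵥ veig) := by
    rw [hGveig, dotProduct_smul, smul_eq_mul]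
  have hlmax0 : 0 ≤ lmax := by
    have h2 := hGpsd.dotProduct_mulVec_nonneg veig
    rw [heig] at h2
    have h2' := (Complex.nonneg_iff.mp h2).1
    rw [Complex.mul_re, Complex.ofReal_re, Complex.ofReal_im, zero_mul, sub_zero] at h2'
    exact (mul_nonneg_iff_of_pos_right hsre).mp h2'
  have hlne : lmax ≠ 0 := by
    intro h
    rw [h] at hGveig
    simp only [Complex.ofReal_zero, zero_smul] at hGveig
    have h3 : ∑ j, (star (ω j) ⬝ᵥ veig) * star (star (ω j) ⬝ᵥ veig) = 0 := by
      rw [← hGquad veig, hGveig, dotProduct_zero]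
    have hz : ∀ j, star (ω j) ⬝ᵥ veig = 0 := by
      intro j
      have hterm := (Finset.sum_eq_zero_iff_of_nonneg
        (fun j _ => mul_star_self_nonneg _)).mp h3 j (Finset.mem_univ j)
      simpa [Complex.star_def, Complex.mul_conj, Complex.ofReal_eq_zero,
        Complex.normSq_eq_zero] using hterm
    apply hveig
    rw [UnambAux.expand ψ ω hli hspan hbi veig]
    exact Finset.sum_eq_zero fun j _ => by rw [hz j, zero_smul]
  have hlpos : 0 < lmax := lt_of_le_of_ne hlmax0 (Ne.symm hlne)
  have hκl : κ * lmax = 1 := by rw [hκ]; field_simp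
  have hκpos : 0 < κ := by rw [hκ]; positivity
  constructor
  · rintro ⟨Q, Qinc, ⟨hQpsd, hQincpsd, hQsum, hQun⟩, hne, hval⟩
    have hstruct : ∀ k, ∃ c : ℝ, 0 ≤ c ∧ Q k = (c : ℂ) • vecMulVec (ω k) (star (ω k)) :=
      fun k => UnambAux.struct ψ ω hli hspan hbi (hQpsd k) k (fun j hj => hQun j k hj)
    choose c hc0 hcQ using hstruct
    have hvals : ∀ k, (star (ψ k) ⬝ᵥ (Q k *ᵥ ψ k)).re = c k := by
      intro k
      rw [hcQ k, UnambAux.valgen ψ ω hbi (c k) k k, if_pos rfl, mul_one, Complex.ofReal_re]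
    simp_rw [hvals] at hval
    have hκle : ∀ i, κ ≤ c i := by
      intro i
      rw [← hval]
      exact ciInf_le (Set.Finite.bddBelow (Set.finite_range c)) i
    have hexists : ∃ i, c i ≠ κ := by
      by_contra h
      push_neg at h
      apply hne
      constructor
      · funext k
        rw [hcQ k, h k, hP]
      · have h1 : Qinc = 1 - ∑ k, Q k := eq_sub_of_add_eq' hQsum
        rw [h1, hPinc, hG, Finset.smul_sum]
        congr 1
        exact Finset.sum_congr rfl fun k _ => by rw [hcQ k, h k]
    obtain ⟨i, hi⟩ := hexists
    refine ⟨i, c i - κ, sub_pos.mpr (lt_of_le_of_ne (hκle i) (Ne.symm hi)), ?_⟩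
    have hQinc_eq : Qinc = 1 - ∑ k, ((c k : ℝ) : ℂ) • vecMulVec (ω k) (star (ω k)) := by
      have h1 : Qinc = 1 - ∑ k, Q k := eq_sub_of_add_eq' hQsum
      rw [h1]
      congr 1
      exact Finset.sum_congr rfl fun k _ => hcQ k
    have key : Pinc - ((c i - κ : ℝ) : ℂ) • vecMulVec (ω i) (star (ω i))
        = Qinc + ∑ k ∈ Finset.univ.erase i,
            (((c k - κ : ℝ)) : ℂ) • vecMulVec (ω k) (star (ω k)) := by
      rw [hQinc_eq, hPinc, hG, Finset.smul_sum]
      push_cast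
      rw [Finset.sum_erase_eq_sub (Finset.mem_univ i)]
      simp_rw [sub_smul]
      rw [Finset.sum_sub_distrib]
      abel
    rw [key]
    exact hQincpsd.add (UnambAux.psd_sum fun k _ =>
      UnambAux.smulW_psd (sub_nonneg.mpr (hκle k)) (ω k))
  · rintro ⟨i, ε, hε, hpsd⟩
    by_cases hex : ∃ j : Fin N, j ≠ i
    · obtain ⟨j₀, hj₀⟩ := hex
      set cQ : Fin N → ℝ := fun j => if j = i then κ + ε else κ with hcQdef
      have hcQ0 : ∀ j, 0 ≤ cQ j := by
        intro j
        simp only [cQ]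
        split <;> linarith
      refine ⟨fun j => ((cQ j : ℝ) : ℂ) • vecMulVec (ω j) (star (ω j)),
        Pinc - (ε : ℂ) • vecMulVec (ω i) (star (ω i)),
        ⟨fun j => UnambAux.smulW_psd (hcQ0 j) (ω j), hpsd, ?_, ?_⟩, ?_, ?_⟩
      · -- sum condition
        have hsum : (∑ j, ((cQ j : ℝ) : ℂ) • vecMulVec (ω j) (star (ω j)))
            = (κ : ℂ) • G + (ε : ℂ) • vecMulVec (ω i) (star (ω i)) := by
          have hterm : ∀ j, ((cQ j : ℝ) : ℂ) • vecMulVec (ω j) (star (ω j))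
              = (κ : ℂ) • vecMulVec (ω j) (star (ω j))
                + (if j = i then (ε : ℂ) • vecMulVec (ω i) (star (ω i)) else 0) := by
            intro j
            by_cases h : j = i
            · subst h
              simp only [cQ, if_pos rfl]
              push_cast
              rw [add_smul]
            · simp only [cQ, if_neg h, add_zero]
          rw [Finset.sum_congr rfl (fun j _ => hterm j), Finset.sum_add_distrib,
            Finset.sum_ite_eq' Finset.univ i
              (fun _ => (ε : ℂ) • vecMulVec (ω i) (star (ω i)))]
          rw [hG, Finset.smul_sum]
          simp
        rw [hsum, hPinc]
        abel
      · -- unambiguity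
        intro a b hab
        rw [UnambAux.valgen ψ ω hbi (cQ b) b a, if_neg (Ne.symm hab), mul_zero]
      · -- not equal to P
        rintro ⟨hQP, -⟩
        have h1 := congrFun hQP i
        have h2 : ((cQ i : ℝ) : ℂ) * (if i = i then 1 else 0) = (κ : ℂ) * (if i = i then 1 else 0) := by
          have := congrArg (fun M => star (ψ i) ⬝ᵥ (M *ᵥ ψ i)) h1
          simp only [hP] at this
          rw [UnambAux.valgen ψ ω hbi (cQ i) i i] at this
          rw [this, UnambAux.valgen ψ ω hbi κ i i]
        rw [if_pos rfl, mul_one, mul_one] at h2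
        have h3 : cQ i = κ := by exact_mod_cast h2
        simp only [cQ, if_pos rfl] at h3
        linarith
      · -- value is κ
        have hv : ∀ jj : Fin N, (star (ψ jj) ⬝ᵥ
            ((((cQ jj : ℝ) : ℂ) • vecMulVec (ω jj) (star (ω jj))) *ᵥ ψ jj)).re = cQ jj := by
          intro jj
          rw [UnambAux.valgen ψ ω hbi (cQ jj) jj jj, if_pos rfl, mul_one, Complex.ofReal_re]
        apply le_antisymm
        · have h4 := ciInf_le (f := fun jj : Fin N => (star (ψ jj) ⬝ᵥ
            ((((cQ jj : ℝ) : ℂ) • vecMulVec (ω jj) (star (ω jj))) *ᵥ ψ jj)).re)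
            (Set.Finite.bddBelow (Set.finite_range _)) j₀
          rw [hv j₀] at h4
          simpa only [cQ, if_neg hj₀] using h4
        · apply le_ciInf
          intro j
          rw [hv j]
          simp only [cQ]
          split <;> linarith
    · -- degenerate case: every index equals i, derive contradiction
      push_neg at hex
      exfalso
      have hPincv : Pinc *ᵥ veig = 0 := by
        rw [hPinc, Matrix.sub_mulVec, Matrix.one_mulVec, smul_mulVec, hGveig, smul_smul,
          ← Complex.ofReal_mul, hκl]
        simp
      have h2 := hpsd.dotProduct_mulVec_nonneg veig
      rw [Matrix.sub_mulVec, hPincv, smul_mulVec, zero_sub, dotProduct_neg,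
        dotProduct_smul, smul_eq_mul, UnambAux.quad] at h2
      set z := star (ω i) ⬝ᵥ veig with hzdef
      have hnn : (0 : ℂ) ≤ (ε : ℂ) * (z * star z) :=
        mul_nonneg (Complex.zero_le_real.mpr hε.le) (mul_star_self_nonneg z)
      have hzero : (ε : ℂ) * (z * star z) = 0 := le_antisymm (neg_nonneg.mp h2) hnn
      have hz0 : z = 0 := by
        have hmul : z * star z = 0 := by
          rcases mul_eq_zero.mp hzero with h | h
          · exact absurd h (by simpa [Complex.ofReal_eq_zero] using hε.ne')
          · exact h
        simpa [Complex.star_def, Complex.mul_conj, Complex.ofReal_eq_zero,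
          Complex.normSq_eq_zero] using hmul
      apply hveig
      rw [UnambAux.expand ψ ω hli hspan hbi veig]
      refine Finset.sum_eq_zero fun j _ => ?_
      rw [hex j, ← hzdef, hz0, zero_smul]
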